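/- Let A be the 3×3 matrix with rows (1,1,1),(1,1,1),(1,0,0) and B = A^t the 3×3 matrix with rows (1,1,1),(1,1,0),(1,1,0). Then ℤ³/(I₃ − A^t)ℤ³ ≅ ℤ/2ℤ and ℤ³/(I₃ − B^t)ℤ³ ≅ ℤ/2ℤ, while ℤ³/M_A ℤ⁴ = 0 and ℤ³/M_B ℤ⁴ ≅ ℤ/2ℤ, where M_A (resp. M_B) is the 3×4 matrix obtained from I₃ − A^t (resp. I₃ − B^t) by appending the column (1,1,1)^t. In particular the two pairs of groups are not isomorphic. -/

import Mathlib

open Matrix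

def Amat : Matrix (Fin 3) (Fin 3) ℤ := !![1,1,1; 1,1,1; 1,0,0]

def Bmat : Matrix (Fin 3) (Fin 3) ℤ := Amatᵀ

/-- The 3×4 matrix obtained from `I₃ − X^t` by appending the column `(1,1,1)^t`. -/
def appOne (X : Matrix (Fin 3) (Fin 3) ℤ) : Matrix (Fin 3) (Fin 4) ℤ :=
  Matrix.of fun i j =>
    if h : (j : ℕ) < 3 then ((1 : Matrix (Fin 3) (Fin 3) ℤ) - Xᵀ) i ⟨j, h⟩
    else 1

lemma hMA : (1 - Amatᵀ) = !![0,-1,-1; -1,0,0; -1,-1,1] := by decide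
lemma hMB : (1 - Bmatᵀ) = !![0,-1,-1; -1,0,-1; -1,0,1] := by decide
lemma hApA : appOne Amat = !![0,-1,-1,1; -1,0,0,1; -1,-1,1,1] := by decide
lemma hApB : appOne Bmat = !![0,-1,-1,1; -1,0,-1,1; -1,0,1,1] := by decide

/-- linear map x ↦ (a·x mod 2) -/
def phi3 (a : Fin 3 → ℤ) : (Fin 3 → ℤ) →ₗ[ℤ] ZMod 2 where
  toFun x := ((a 0 * x 0 + a 1 * x 1 + a 2 * x 2 : ℤ) : ZMod 2)
  map_add' x y := by push_cast [Pi.add_apply]; ring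
  map_smul' c x := by
    simp only [Pi.smul_apply, smul_eq_mul, RingHom.id_apply, zsmul_eq_mul]
    push_cast
    ring

lemma phi3_surj (a : Fin 3 → ℤ) (h : a 0 = 1 ∨ a 1 = 1) :
    Function.Surjective (phi3 a) := by
  intro z
  obtain ⟨k, rfl⟩ := ZMod.intCast_surjective z
  rcases h with h | h
  · exact ⟨![k, 0, 0], by simp [phi3, h]⟩
  · exact ⟨![0, k, 0], by simp [phi3, h]⟩

lemma zmod2_cast_eq_zero (n : ℤ) (h : 2 ∣ n) : ((n : ZMod 2) = 0) := by
  rwa [ZMod.intCast_zmod_eq_zero_iff_dvd]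

lemma zmod2_dvd_of_cast_eq_zero (n : ℤ) (h : ((n : ZMod 2) = 0)) : 2 ∣ n := by
  rwa [ZMod.intCast_zmod_eq_zero_iff_dvd] at h

lemma kerA : LinearMap.range (1 - Amatᵀ).mulVecLin = LinearMap.ker (phi3 ![1,1,1]) := by
  rw [hMA]
  ext x
  simp only [LinearMap.mem_range, LinearMap.mem_ker]
  constructor
  · rintro ⟨y, rfl⟩
    have hv : (!![0,-1,-1; -1,0,0; -1,-1,1] : Matrix (Fin 3) (Fin 3) ℤ).mulVecLin y
        = ![-(y 1) - y 2, -(y 0), -(y 0) - y 1 + y 2] := by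
      funext i
      fin_cases i <;> (simp [mulVecLin_apply, mulVec, dotProduct, Fin.sum_univ_three]; try ring)
    rw [hv]
    simp only [phi3, LinearMap.coe_mk, AddHom.coe_mk]
    norm_num
    have h2 : (2 : ZMod 2) = 0 := rfl
    ring_nf
    simp [h2]
    linear_combination (↑(y 1) : ZMod 2) * h2
  · intro hx
    have h2 : (2 : ℤ) ∣ (x 0 + x 1 + x 2) := by
      apply zmod2_dvd_of_cast_eq_zero
      simpa [phi3] using hx
    obtain ⟨k, hk⟩ := h2
    refine ⟨![-(x 1), x 1 - k, x 2 - k], ?_⟩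
    funext i
    fin_cases i <;>
      simp [mulVecLin_apply, mulVec, dotProduct, Fin.sum_univ_three] <;> omega

lemma kerB : LinearMap.range (1 - Bmatᵀ).mulVecLin = LinearMap.ker (phi3 ![0,1,1]) := by
  rw [hMB]
  ext x
  simp only [LinearMap.mem_range, LinearMap.mem_ker]
  constructor
  · rintro ⟨y, rfl⟩
    have hv : (!![0,-1,-1; -1,0,-1; -1,0,1] : Matrix (Fin 3) (Fin 3) ℤ).mulVecLin y
        = ![-(y 1) - y 2, -(y 0) - y 2, -(y 0) + y 2] := by
      funext i
      fin_cases i <;> (simp [mulVecLin_apply, mulVec, dotProduct, Fin.sum_univ_three]; try ring)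
    rw [hv]
    simp only [phi3, LinearMap.coe_mk, AddHom.coe_mk]
    norm_num
    have h2 : (2 : ZMod 2) = 0 := rfl
    ring_nf
    simp [h2]
  · intro hx
    have h2 : (2 : ℤ) ∣ (x 1 + x 2) := by
      apply zmod2_dvd_of_cast_eq_zero
      simpa [phi3] using hx
    obtain ⟨k, hk⟩ := h2
    refine ⟨![-k, -(x 0) + x 1 - k, x 2 - k], ?_⟩
    funext i
    fin_cases i <;>
      simp [mulVecLin_apply, mulVec, dotProduct, Fin.sum_univ_three] <;> omega

lemma topA : LinearMap.range (appOne Amat).mulVecLin = ⊤ := by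
  rw [hApA, eq_top_iff]
  rintro x -
  refine ⟨![x 0 - x 2, x 1 - x 2, 0, x 0 + x 1 - x 2], ?_⟩
  funext i
  fin_cases i <;>
    simp [mulVecLin_apply, mulVec, dotProduct, Fin.sum_univ_four] <;> omega

lemma kerAB : LinearMap.range (appOne Bmat).mulVecLin = LinearMap.ker (phi3 ![0,1,1]) := by
  rw [hApB]
  ext x
  simp only [LinearMap.mem_range, LinearMap.mem_ker]
  constructor
  · rintro ⟨y, rfl⟩
    have hv : (!![0,-1,-1,1; -1,0,-1,1; -1,0,1,1] : Matrix (Fin 3) (Fin 4) ℤ).mulVecLin y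
        = ![-(y 1) - y 2 + y 3, -(y 0) - y 2 + y 3, -(y 0) + y 2 + y 3] := by
      funext i
      fin_cases i <;> (simp [mulVecLin_apply, mulVec, dotProduct, Fin.sum_univ_four]; try ring)
    rw [hv]
    simp only [phi3, LinearMap.coe_mk, AddHom.coe_mk]
    norm_num
    have h2 : (2 : ZMod 2) = 0 := rfl
    ring_nf
    simp [h2]
    linear_combination (↑(y 3) : ZMod 2) * h2
  · intro hx
    have h2 : (2 : ℤ) ∣ (x 1 + x 2) := by
      apply zmod2_dvd_of_cast_eq_zero
      simpa [phi3] using hx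
    obtain ⟨k, hk⟩ := h2
    refine ⟨![-k, -(x 0) + x 1 - k, x 2 - k, 0], ?_⟩
    funext i
    fin_cases i <;>
      simp [mulVecLin_apply, mulVec, dotProduct, Fin.sum_univ_four] <;> omega

noncomputable def equivOfKer {p : Submodule ℤ (Fin 3 → ℤ)} (a : Fin 3 → ℤ)
    (h : p = LinearMap.ker (phi3 a)) (ha : a 0 = 1 ∨ a 1 = 1) :
    ((Fin 3 → ℤ) ⧸ p) ≃ₗ[ℤ] ZMod 2 :=
  (Submodule.quotEquivOfEq _ _ h).trans
    ((phi3 a).quotKerEquivOfSurjective (phi3_surj a ha))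

theorem stmt16 :
    -- ℤ³/(I₃ − A^t)ℤ³ ≅ ℤ/2ℤ
    Nonempty (((Fin 3 → ℤ) ⧸ LinearMap.range (1 - Amatᵀ).mulVecLin) ≃ₗ[ℤ] ZMod 2) ∧
    -- ℤ³/(I₃ − B^t)ℤ³ ≅ ℤ/2ℤ
    Nonempty (((Fin 3 → ℤ) ⧸ LinearMap.range (1 - Bmatᵀ).mulVecLin) ≃ₗ[ℤ] ZMod 2) ∧
    -- ℤ³/M_A ℤ⁴ = 0
    LinearMap.range (appOne Amat).mulVecLin = ⊤ ∧
    -- ℤ³/M_B ℤ⁴ ≅ ℤ/2ℤ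
    Nonempty (((Fin 3 → ℤ) ⧸ LinearMap.range (appOne Bmat).mulVecLin) ≃ₗ[ℤ] ZMod 2) ∧
    -- in particular the two pairs of groups are not isomorphic
    ¬ (Nonempty (((Fin 3 → ℤ) ⧸ LinearMap.range (1 - Amatᵀ).mulVecLin) ≃ₗ[ℤ]
          ((Fin 3 → ℤ) ⧸ LinearMap.range (1 - Bmatᵀ).mulVecLin)) ∧
       Nonempty (((Fin 3 → ℤ) ⧸ LinearMap.range (appOne Amat).mulVecLin) ≃ₗ[ℤ]
          ((Fin 3 → ℤ) ⧸ LinearMap.range (appOne Bmat).mulVecLin))) := by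
  have eB : ((Fin 3 → ℤ) ⧸ LinearMap.range (appOne Bmat).mulVecLin) ≃ₗ[ℤ] ZMod 2 :=
    equivOfKer ![0,1,1] kerAB (Or.inr rfl)
  refine ⟨⟨equivOfKer ![1,1,1] kerA (Or.inl rfl)⟩,
    ⟨equivOfKer ![0,1,1] kerB (Or.inr rfl)⟩, topA, ⟨eB⟩, ?_⟩
  rintro ⟨-, ⟨e⟩⟩
  have hsub : Subsingleton ((Fin 3 → ℤ) ⧸ LinearMap.range (appOne Amat).mulVecLin) := by
    rw [Submodule.Quotient.subsingleton_iff]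
    exact topA
  have : Subsingleton (ZMod 2) := (e.toEquiv.trans eB.toEquiv).symm.subsingleton
  exact absurd (Subsingleton.elim (0 : ZMod 2) 1) (by decide)
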